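/- arXiv:math/0502249 — 2 statements merged into one kernel-verified Lean document; each statement's English description precedes it below -/
import Mathlib

section
/- Let X ⊆ ℝ² be the comb-like space X = ({0} ∪ {1/n : n ∈ ℕ, n ≥ 1}) × [0,1] ∪ [0,1] × {0} ∪ [0,1] × {1}, with basepoint p = (0,0). Then the topological fundamental group π₁(X,p), defined as the quotient of the loop space C_p(X) (with uniform convergence topology) by path components, does not have the discrete topology, even though X is semilocally simply connected at every point. -/
open Topology Filter unitInterval

/-- `X` is semilocally simply connected at `p`: some open neighborhood `U` of `p` is such
that every loop at `p` contained in `U` is null-homotopic (rel endpoints) in `X`. -/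
def SemilocallySimplyConnectedAt (X : Type*) [TopologicalSpace X] (p : X) : Prop :=
  ∃ U : Set X, IsOpen U ∧ p ∈ U ∧
    ∀ γ : Path p p, (∀ t, γ t ∈ U) → γ.Homotopic (Path.refl p)

/-- The comb-like space of the paper. -/
def comb : Set (ℝ × ℝ) :=
  (({0} ∪ {x : ℝ | ∃ n : ℕ, 1 ≤ n ∧ x = 1 / n}) ×ˢ Set.Icc 0 1) ∪
    (Set.Icc 0 1 ×ˢ ({0} : Set ℝ)) ∪ (Set.Icc 0 1 ×ˢ ({1} : Set ℝ))

lemma combP_mem : ((0 : ℝ), (0 : ℝ)) ∈ comb :=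
  Or.inl (Or.inr ⟨⟨le_refl _, zero_le_one⟩, rfl⟩)

/-- The basepoint `p = (0,0)` of the comb space. -/
def combP : comb := ⟨(0, 0), combP_mem⟩

/-! ### Basic facts about the comb -/

/-- The set of first coordinates of teeth. -/
def Vset : Set ℝ := {0} ∪ {x : ℝ | ∃ n : ℕ, 1 ≤ n ∧ x = 1 / n}

lemma Vset_subset_Icc : Vset ⊆ Set.Icc (0:ℝ) 1 := by
  rintro x (rfl | ⟨n, hn, rfl⟩)
  · exact ⟨le_refl _, zero_le_one⟩
  · have hn' : (1:ℝ) ≤ (n:ℝ) := by exact_mod_cast hn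
    constructor
    · positivity
    · rw [div_le_one (by linarith)]; exact hn'

lemma Vset_countable : Vset.Countable := by
  apply Set.Countable.union (Set.countable_singleton _)
  have : {x : ℝ | ∃ n : ℕ, 1 ≤ n ∧ x = 1 / n} ⊆ Set.range (fun n : ℕ => 1 / (n:ℝ)) := by
    rintro x ⟨n, _, rfl⟩; exact ⟨n, rfl⟩
  exact (Set.countable_range _).mono this

lemma mem_comb_vert {x y : ℝ} (hx : x ∈ Vset) (hy : y ∈ Set.Icc (0:ℝ) 1) : (x, y) ∈ comb :=
  Or.inl (Or.inl ⟨hx, hy⟩)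

lemma mem_comb_bottom {x : ℝ} (hx : x ∈ Set.Icc (0:ℝ) 1) : (x, (0:ℝ)) ∈ comb :=
  Or.inl (Or.inr ⟨hx, rfl⟩)

lemma mem_comb_top {x : ℝ} (hx : x ∈ Set.Icc (0:ℝ) 1) : (x, (1:ℝ)) ∈ comb :=
  Or.inr ⟨hx, rfl⟩

lemma comb_coord {z : ℝ × ℝ} (hz : z ∈ comb) :
    z.1 ∈ Set.Icc (0:ℝ) 1 ∧ z.2 ∈ Set.Icc (0:ℝ) 1 := by
  rcases hz with (⟨h1, h2⟩ | ⟨h1, h2⟩) | ⟨h1, h2⟩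
  · exact ⟨Vset_subset_Icc h1, h2⟩
  · rw [Set.mem_singleton_iff] at h2; rw [h2]; exact ⟨h1, ⟨le_refl _, zero_le_one⟩⟩
  · rw [Set.mem_singleton_iff] at h2; rw [h2]; exact ⟨h1, ⟨zero_le_one, le_refl _⟩⟩

lemma comb_cases {z : ℝ × ℝ} (hz : z ∈ comb) : z.1 ∈ Vset ∨ z.2 = 0 ∨ z.2 = 1 := by
  rcases hz with (⟨h1, _⟩ | ⟨_, h2⟩) | ⟨_, h2⟩
  · exact Or.inl h1
  · exact Or.inr (Or.inl h2)
  · exact Or.inr (Or.inr h2)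

lemma comb_vert_of {z : ℝ × ℝ} (hz : z ∈ comb) (h0 : z.2 ≠ 0) (h1 : z.2 ≠ 1) :
    z.1 ∈ Vset := by
  rcases comb_cases hz with h | h | h
  · exact h
  · exact absurd h h0
  · exact absurd h h1

/-! ### A helper for building path homotopies in the comb -/

/-- Build a `Path.Homotopic` between two paths in the comb from an explicit formula. -/
lemma comb_homotopic {x y : ↥comb} (γ γ' : Path x y) (F : I × I → ℝ × ℝ)
    (hF : Continuous F) (hmem : ∀ p, F p ∈ comb)
    (h0 : ∀ t, F (0, t) = (γ t : ℝ × ℝ)) (h1 : ∀ t, F (1, t) = (γ' t : ℝ × ℝ))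
    (hsrc : ∀ s, F (s, 0) = (x : ℝ × ℝ)) (htgt : ∀ s, F (s, 1) = (y : ℝ × ℝ)) :
    γ.Homotopic γ' := by
  refine ⟨{ toFun := fun p => ⟨F p, hmem p⟩
            continuous_toFun := hF.subtype_mk _
            map_zero_left := fun t => Subtype.ext (h0 t)
            map_one_left := fun t => Subtype.ext (h1 t)
            prop' := fun s t ht => ?_ }⟩
  rcases ht with rfl | ht
  · show (⟨F (s, 0), _⟩ : ↥comb) = γ 0
    refine Subtype.ext ?_
    show F (s, 0) = ((γ 0 : ↥comb) : ℝ × ℝ)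
    rw [hsrc s, γ.source]
  · rcases ht with rfl
    show (⟨F (s, 1), _⟩ : ↥comb) = γ 1
    refine Subtype.ext ?_
    show F (s, 1) = ((γ 1 : ↥comb) : ℝ × ℝ)
    rw [htgt s, γ.target]

/-! ### Part B: semilocal simple connectivity -/

section PartB
open Set

lemma comb_cont_fst {x y : ↥comb} (γ : Path x y) :
    Continuous fun t : I => ((γ t : ℝ × ℝ)).1 :=
  continuous_fst.comp (continuous_subtype_val.comp γ.continuous)

lemma comb_cont_snd {x y : ↥comb} (γ : Path x y) :
    Continuous fun t : I => ((γ t : ℝ × ℝ)).2 :=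
  continuous_snd.comp (continuous_subtype_val.comp γ.continuous)

lemma comb_slsc_bottom (x : ↥comb) (hx : (x : ℝ × ℝ).2 = 0) :
    SemilocallySimplyConnectedAt ↥comb x := by
  refine ⟨{z : ↥comb | (z : ℝ × ℝ).2 < 1}, (isOpen_Iio).preimage
    (continuous_snd.comp continuous_subtype_val), by simp [hx], ?_⟩
  intro γ hγ
  have ha : (x : ℝ × ℝ).1 ∈ Set.Icc (0:ℝ) 1 := (comb_coord x.2).1
  -- x = (a, 0)
  have hxe : (x : ℝ × ℝ) = ((x : ℝ × ℝ).1, (0:ℝ)) := by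
    rw [← hx]
  -- intermediate path: project to the bottom bar
  have hmem1 : ∀ t : I, (((γ t : ℝ × ℝ)).1, (0:ℝ)) ∈ comb := fun t =>
    mem_comb_bottom (comb_coord (γ t).2).1
  set γ' : Path x x :=
    { toFun := fun t => ⟨(((γ t : ℝ × ℝ)).1, (0:ℝ)), hmem1 t⟩
      continuous_toFun := ((comb_cont_fst γ).prodMk continuous_const).subtype_mk _
      source' := by
        refine Subtype.ext ?_
        show (((γ 0 : ℝ × ℝ)).1, (0:ℝ)) = (x : ℝ × ℝ)
        rw [γ.source, hxe]
      target' := by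
        refine Subtype.ext ?_
        show (((γ 1 : ℝ × ℝ)).1, (0:ℝ)) = (x : ℝ × ℝ)
        rw [γ.target, hxe] } with hγ'
  have step1 : γ.Homotopic γ' := by
    apply comb_homotopic γ γ'
      (F := fun p : I × I => (((γ p.2 : ℝ × ℝ)).1, (1 - (p.1 : ℝ)) * ((γ p.2 : ℝ × ℝ)).2))
    · exact ((comb_cont_fst γ).comp continuous_snd).prodMk
        (((continuous_const.sub continuous_induced_dom).comp continuous_fst).mul
          ((comb_cont_snd γ).comp continuous_snd))
    · rintro ⟨s, t⟩
      have hz := (γ t).2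
      have hlt : ((γ t : ℝ × ℝ)).2 < 1 := hγ t
      rcases comb_cases hz with h | h | h
      · refine mem_comb_vert h ?_
        have h2 := (comb_coord hz).2
        have hs := s.2
        simp only [Set.mem_Icc] at h2 hs ⊢
        constructor
        · nlinarith [h2.1, hs.1, hs.2]
        · nlinarith [h2.1, h2.2, hs.1, hs.2]
      · simp only [h, mul_zero]
        exact mem_comb_bottom (comb_coord hz).1
      · exact absurd h (ne_of_lt hlt)
    · intro t; simp
    · intro t; simp [hγ']
    · intro s
      show (((γ 0 : ℝ × ℝ)).1, (1 - (s:ℝ)) * ((γ 0 : ℝ × ℝ)).2) = (x : ℝ × ℝ)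
      rw [γ.source, hx, mul_zero, ← hx]
    · intro s
      show (((γ 1 : ℝ × ℝ)).1, (1 - (s:ℝ)) * ((γ 1 : ℝ × ℝ)).2) = (x : ℝ × ℝ)
      rw [γ.target, hx, mul_zero, ← hx]
  have step2 : γ'.Homotopic (Path.refl x) := by
    apply comb_homotopic γ' (Path.refl x)
      (F := fun p : I × I =>
        ((1 - (p.1 : ℝ)) * ((γ p.2 : ℝ × ℝ)).1 + (p.1 : ℝ) * (x : ℝ × ℝ).1, (0:ℝ)))
    · refine (Continuous.add ?_ ?_).prodMk continuous_const
      · exact ((continuous_const.sub continuous_induced_dom).comp continuous_fst).mul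
          ((comb_cont_fst γ).comp continuous_snd)
      · exact (continuous_induced_dom.comp continuous_fst).mul continuous_const
    · rintro ⟨s, t⟩
      refine mem_comb_bottom ?_
      have h1 := (comb_coord (γ t).2).1
      have hs := s.2
      simp only [Set.mem_Icc] at h1 ha hs ⊢
      constructor
      · nlinarith [h1.1, ha.1, hs.1, hs.2]
      · nlinarith [h1.1, h1.2, ha.1, ha.2, hs.1, hs.2]
    · intro t
      show ((1 - (0:ℝ)) * _ + (0:ℝ) * _, (0:ℝ)) = _
      simp [hγ']
    · intro t
      show ((1 - (1:ℝ)) * _ + (1:ℝ) * _, (0:ℝ)) = ((x : ℝ × ℝ))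
      rw [hxe]; ring_nf
    · intro s
      show ((1 - (s:ℝ)) * ((γ 0 : ℝ × ℝ)).1 + (s:ℝ) * _, (0:ℝ)) = (x : ℝ × ℝ)
      rw [γ.source, hxe]; ring_nf
    · intro s
      show ((1 - (s:ℝ)) * ((γ 1 : ℝ × ℝ)).1 + (s:ℝ) * _, (0:ℝ)) = (x : ℝ × ℝ)
      rw [γ.target, hxe]; ring_nf
  exact step1.trans step2

end PartB

section PartB2
open Set

lemma comb_slsc_top (x : ↥comb) (hx : (x : ℝ × ℝ).2 = 1) :
    SemilocallySimplyConnectedAt ↥comb x := by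
  refine ⟨{z : ↥comb | 0 < (z : ℝ × ℝ).2}, (isOpen_Ioi).preimage
    (continuous_snd.comp continuous_subtype_val), by simp [hx], ?_⟩
  intro γ hγ
  have ha : (x : ℝ × ℝ).1 ∈ Set.Icc (0:ℝ) 1 := (comb_coord x.2).1
  have hxe : (x : ℝ × ℝ) = ((x : ℝ × ℝ).1, (1:ℝ)) := by rw [← hx]
  have hmem1 : ∀ t : I, (((γ t : ℝ × ℝ)).1, (1:ℝ)) ∈ comb := fun t =>
    mem_comb_top (comb_coord (γ t).2).1
  set γ' : Path x x :=
    { toFun := fun t => ⟨(((γ t : ℝ × ℝ)).1, (1:ℝ)), hmem1 t⟩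
      continuous_toFun := ((comb_cont_fst γ).prodMk continuous_const).subtype_mk _
      source' := by
        refine Subtype.ext ?_
        show (((γ 0 : ℝ × ℝ)).1, (1:ℝ)) = (x : ℝ × ℝ)
        rw [γ.source, hxe]
      target' := by
        refine Subtype.ext ?_
        show (((γ 1 : ℝ × ℝ)).1, (1:ℝ)) = (x : ℝ × ℝ)
        rw [γ.target, hxe] } with hγ'
  have step1 : γ.Homotopic γ' := by
    apply comb_homotopic γ γ'
      (F := fun p : I × I =>
        (((γ p.2 : ℝ × ℝ)).1, (1 - (p.1 : ℝ)) * ((γ p.2 : ℝ × ℝ)).2 + (p.1 : ℝ)))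
    · exact ((comb_cont_fst γ).comp continuous_snd).prodMk
        ((((continuous_const.sub continuous_induced_dom).comp continuous_fst).mul
          ((comb_cont_snd γ).comp continuous_snd)).add
            (continuous_induced_dom.comp continuous_fst))
    · rintro ⟨s, t⟩
      have hz := (γ t).2
      have hlt : 0 < ((γ t : ℝ × ℝ)).2 := hγ t
      rcases comb_cases hz with h | h | h
      · refine mem_comb_vert h ?_
        have h2 := (comb_coord hz).2
        have hs := s.2
        simp only [Set.mem_Icc] at h2 hs ⊢
        constructor
        · nlinarith [h2.1, hs.1, hs.2]
        · nlinarith [h2.1, h2.2, hs.1, hs.2]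
      · exact absurd h.symm (ne_of_lt hlt)
      · simp only [h]
        have : (1 - (s:ℝ)) * 1 + (s:ℝ) = 1 := by ring
        rw [this]
        exact mem_comb_top (comb_coord hz).1
    · intro t; simp
    · intro t
      show (_, (1 - (1:ℝ)) * _ + (1:ℝ)) = _
      simp [hγ']
    · intro s
      show (((γ 0 : ℝ × ℝ)).1, (1 - (s:ℝ)) * ((γ 0 : ℝ × ℝ)).2 + (s:ℝ)) = (x : ℝ × ℝ)
      rw [γ.source, hxe]; ring_nf
    · intro s
      show (((γ 1 : ℝ × ℝ)).1, (1 - (s:ℝ)) * ((γ 1 : ℝ × ℝ)).2 + (s:ℝ)) = (x : ℝ × ℝ)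
      rw [γ.target, hxe]; ring_nf
  have step2 : γ'.Homotopic (Path.refl x) := by
    apply comb_homotopic γ' (Path.refl x)
      (F := fun p : I × I =>
        ((1 - (p.1 : ℝ)) * ((γ p.2 : ℝ × ℝ)).1 + (p.1 : ℝ) * (x : ℝ × ℝ).1, (1:ℝ)))
    · refine (Continuous.add ?_ ?_).prodMk continuous_const
      · exact ((continuous_const.sub continuous_induced_dom).comp continuous_fst).mul
          ((comb_cont_fst γ).comp continuous_snd)
      · exact (continuous_induced_dom.comp continuous_fst).mul continuous_const
    · rintro ⟨s, t⟩
      refine mem_comb_top ?_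
      have h1 := (comb_coord (γ t).2).1
      have hs := s.2
      simp only [Set.mem_Icc] at h1 ha hs ⊢
      constructor
      · nlinarith [h1.1, ha.1, hs.1, hs.2]
      · nlinarith [h1.1, h1.2, ha.1, ha.2, hs.1, hs.2]
    · intro t
      show ((1 - (0:ℝ)) * _ + (0:ℝ) * _, (1:ℝ)) = _
      simp [hγ']
    · intro t
      show ((1 - (1:ℝ)) * _ + (1:ℝ) * _, (1:ℝ)) = ((x : ℝ × ℝ))
      rw [hxe]; ring_nf
    · intro s
      show ((1 - (s:ℝ)) * ((γ 0 : ℝ × ℝ)).1 + (s:ℝ) * _, (1:ℝ)) = (x : ℝ × ℝ)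
      rw [γ.source, hxe]; ring_nf
    · intro s
      show ((1 - (s:ℝ)) * ((γ 1 : ℝ × ℝ)).1 + (s:ℝ) * _, (1:ℝ)) = (x : ℝ × ℝ)
      rw [γ.target, hxe]; ring_nf
  exact step1.trans step2

end PartB2

section PartB3
open Set

lemma const_of_mem_countable {φ : I → ℝ} (hφ : Continuous φ) {S : Set ℝ}
    (hS : S.Countable) (hv : ∀ t, φ t ∈ S) : ∀ t, φ t = φ 0 := by
  intro t
  by_contra hne
  set ψ : ℝ → ℝ := φ ∘ Set.projIcc 0 1 zero_le_one with hψ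
  have hψc : Continuous ψ := hφ.comp continuous_projIcc
  have hval : ∀ s : I, ψ (s : ℝ) = φ s := fun s => by
    simp [hψ, Set.projIcc_val]
  have hsub : Set.uIcc (ψ 0) (ψ (t : ℝ)) ⊆ S := by
    refine subset_trans (intermediate_value_uIcc hψc.continuousOn) ?_
    rintro y ⟨r, _, rfl⟩
    exact hv _
  have h0 : ψ 0 = φ 0 := by
    have := hval 0
    simpa using this
  have hne' : ψ 0 ≠ ψ (t : ℝ) := by
    rw [h0, hval t]; exact fun h => hne h.symm
  have hlt : min (ψ 0) (ψ (t:ℝ)) < max (ψ 0) (ψ (t:ℝ)) := min_lt_max.mpr hne'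
  have hIoo : Set.Ioo (min (ψ 0) (ψ (t:ℝ))) (max (ψ 0) (ψ (t:ℝ))) ⊆ S := by
    refine subset_trans ?_ hsub
    rw [Set.uIcc]
    exact Set.Ioo_subset_Icc_self
  have hcnt : (Set.Ioo (min (ψ 0) (ψ (t:ℝ))) (max (ψ 0) (ψ (t:ℝ)))).Countable :=
    hS.mono hIoo
  have h1 : (Cardinal.mk (Set.Ioo (min (ψ 0) (ψ (t:ℝ))) (max (ψ 0) (ψ (t:ℝ))))) ≤ Cardinal.aleph0 :=
    Cardinal.mk_le_aleph0_iff.mpr (Set.countable_coe_iff.mpr hcnt)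
  rw [Cardinal.mk_Ioo_real hlt] at h1
  exact absurd h1 (not_le.mpr Cardinal.aleph0_lt_continuum)

lemma comb_slsc_mid (x : ↥comb) (h0 : (x : ℝ × ℝ).2 ≠ 0) (h1 : (x : ℝ × ℝ).2 ≠ 1) :
    SemilocallySimplyConnectedAt ↥comb x := by
  have haV : (x : ℝ × ℝ).1 ∈ Vset := comb_vert_of x.2 h0 h1
  have hb : (x : ℝ × ℝ).2 ∈ Set.Icc (0:ℝ) 1 := (comb_coord x.2).2
  have hb0 : 0 < (x : ℝ × ℝ).2 := lt_of_le_of_ne hb.1 (Ne.symm h0)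
  have hb1 : (x : ℝ × ℝ).2 < 1 := lt_of_le_of_ne hb.2 h1
  refine ⟨{z : ↥comb | 0 < (z : ℝ × ℝ).2 ∧ (z : ℝ × ℝ).2 < 1}, ?_, ⟨hb0, hb1⟩, ?_⟩
  · exact ((isOpen_Ioi).preimage (continuous_snd.comp continuous_subtype_val)).inter
      ((isOpen_Iio).preimage (continuous_snd.comp continuous_subtype_val))
  · intro γ hγ
    -- the first coordinate is constant
    have hVmem : ∀ t, ((γ t : ℝ × ℝ)).1 ∈ Vset := fun t =>
      comb_vert_of (γ t).2 (ne_of_gt (hγ t).1) (ne_of_lt (hγ t).2)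
    have hconst : ∀ t, ((γ t : ℝ × ℝ)).1 = (x : ℝ × ℝ).1 := by
      have := const_of_mem_countable (comb_cont_fst γ) Vset_countable hVmem
      intro t
      rw [this t]
      show ((γ 0 : ℝ × ℝ)).1 = _
      rw [γ.source]
    apply comb_homotopic γ (Path.refl x)
      (F := fun p : I × I =>
        ((x : ℝ × ℝ).1, (1 - (p.1 : ℝ)) * ((γ p.2 : ℝ × ℝ)).2 + (p.1 : ℝ) * (x : ℝ × ℝ).2))
    · refine continuous_const.prodMk (Continuous.add ?_ ?_)
      · exact ((continuous_const.sub continuous_induced_dom).comp continuous_fst).mul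
          ((comb_cont_snd γ).comp continuous_snd)
      · exact (continuous_induced_dom.comp continuous_fst).mul continuous_const
    · rintro ⟨s, t⟩
      refine mem_comb_vert haV ?_
      have h2 := (comb_coord (γ t).2).2
      have hs := s.2
      simp only [Set.mem_Icc] at h2 hs hb ⊢
      constructor
      · nlinarith [h2.1, hb.1, hs.1, hs.2]
      · nlinarith [h2.1, h2.2, hb.1, hb.2, hs.1, hs.2]
    · intro t
      show ((x : ℝ × ℝ).1, (1 - (0:ℝ)) * _ + (0:ℝ) * _) = ((γ t : ℝ × ℝ))
      rw [← hconst t]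
      have : (1 - (0:ℝ)) * ((γ t : ℝ × ℝ)).2 + (0:ℝ) * (x : ℝ × ℝ).2 = ((γ t : ℝ × ℝ)).2 := by
        ring
      rw [this]
    · intro t
      show ((x : ℝ × ℝ).1, (1 - (1:ℝ)) * _ + (1:ℝ) * _) = ((x : ℝ × ℝ))
      have : (1 - (1:ℝ)) * ((γ t : ℝ × ℝ)).2 + (1:ℝ) * (x : ℝ × ℝ).2 = (x : ℝ × ℝ).2 := by
        ring
      rw [this]
    · intro s
      show ((x : ℝ × ℝ).1, (1 - (s:ℝ)) * ((γ 0 : ℝ × ℝ)).2 + (s:ℝ) * _) = (x : ℝ × ℝ)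
      rw [γ.source]; ring_nf
    · intro s
      show ((x : ℝ × ℝ).1, (1 - (s:ℝ)) * ((γ 1 : ℝ × ℝ)).2 + (s:ℝ) * _) = (x : ℝ × ℝ)
      rw [γ.target]; ring_nf

theorem comb_slsc : ∀ x : ↥comb, SemilocallySimplyConnectedAt ↥comb x := by
  intro x
  by_cases h0 : (x : ℝ × ℝ).2 = 0
  · exact comb_slsc_bottom x h0
  by_cases h1 : (x : ℝ × ℝ).2 = 1
  · exact comb_slsc_top x h1
  exact comb_slsc_mid x h0 h1

end PartB3

noncomputable section

local instance fact01 : Fact ((0:ℝ) < 1) := ⟨one_pos⟩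

/-- The representative in `[-1/2, 1/2)` of an element of `ℝ/ℤ`. -/
def dlt (w : AddCircle (1:ℝ)) : ℝ :=
  ((AddCircle.equivIco 1 (-(1/2)) w : Set.Ico (-(1/2):ℝ) (-(1/2)+1)) : ℝ)

lemma dlt_coe (w : AddCircle (1:ℝ)) : ((dlt w : ℝ) : AddCircle (1:ℝ)) = w := by
  conv_rhs => rw [← (AddCircle.equivIco 1 (-(1/2))).symm_apply_apply w]
  rfl

lemma dlt_mem (w : AddCircle (1:ℝ)) : dlt w ∈ Set.Ico (-(1/2):ℝ) (-(1/2)+1) :=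
  (AddCircle.equivIco 1 (-(1/2)) w).2

lemma dlt_continuousAt {w : AddCircle (1:ℝ)} (hw : w ≠ ((-(1/2) : ℝ) : AddCircle (1:ℝ))) :
    ContinuousAt dlt w :=
  continuous_subtype_val.continuousAt.comp (AddCircle.continuousAt_equivIco 1 (-(1/2)) hw)

lemma norm_half : ‖((-(1/2) : ℝ) : AddCircle (1:ℝ))‖ = 1/2 := by
  rw [AddCircle.norm_eq]
  norm_num [round_eq]

lemma ne_half_of_norm_lt {w : AddCircle (1:ℝ)} (h : ‖w‖ < 1/2) :
    w ≠ ((-(1/2) : ℝ) : AddCircle (1:ℝ)) := by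
  intro he
  rw [he, norm_half] at h
  exact lt_irrefl _ h

lemma coe_int_eq_zero (k : ℤ) : (((k : ℝ)) : AddCircle (1:ℝ)) = 0 := by
  rw [AddCircle.coe_eq_zero_iff]
  exact ⟨k, by simp⟩

lemma coe_eq_coe_iff_exists_int {a b : ℝ} :
    ((a : AddCircle (1:ℝ)) = (b : AddCircle (1:ℝ))) ↔ ∃ k : ℤ, a - b = k := by
  constructor
  · intro h
    have : ((a - b : ℝ) : AddCircle (1:ℝ)) = 0 := by
      push_cast [QuotientAddGroup.mk_sub]
      rw [h]; abel
    rw [AddCircle.coe_eq_zero_iff] at this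
    obtain ⟨k, hk⟩ := this
    exact ⟨k, by rw [← hk]; simp⟩
  · rintro ⟨k, hk⟩
    have : a = b + k := by linarith
    rw [this]
    rw [QuotientAddGroup.mk_add]
    rw [coe_int_eq_zero k]
    abel

/-- Two continuous real lifts of the same circle-valued function on `I` differ by a constant. -/
lemma lift_diff_const {u v : I → ℝ} (hu : Continuous u) (hv : Continuous v)
    (h : ∀ t, ((u t : ℝ) : AddCircle (1:ℝ)) = ((v t : ℝ) : AddCircle (1:ℝ))) (t : I) :
    u t - v t = u 0 - v 0 := by
  by_contra hne
  set w : ℝ → ℝ := (fun s : I => u s - v s) ∘ Set.projIcc 0 1 zero_le_one with hw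
  have hwc : Continuous w := (hu.sub hv).comp continuous_projIcc
  have hval : ∀ s : I, w (s : ℝ) = u s - v s := fun s => by simp [hw, Set.projIcc_val]
  have hint : ∀ r : ℝ, ∃ k : ℤ, w r = k := by
    intro r
    exact coe_eq_coe_iff_exists_int.mp (h (Set.projIcc 0 1 zero_le_one r))
  have h0 : w 0 = u 0 - v 0 := by have := hval 0; simpa using this
  have hne' : w 0 ≠ w (t : ℝ) := by rw [h0, hval t]; exact fun hh => hne hh.symm
  obtain ⟨k₀, hk₀⟩ := hint 0
  obtain ⟨k₁, hk₁⟩ := hint (t : ℝ)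
  have hkne : k₀ ≠ k₁ := by
    intro hk; apply hne'; rw [hk₀, hk₁, hk]
  have hmem : ((min k₀ k₁ : ℤ) : ℝ) + 1/2 ∈ Set.uIcc (w 0) (w (t:ℝ)) := by
    rw [hk₀, hk₁, Set.mem_uIcc]
    rcases le_total k₀ k₁ with hle | hle
    · left
      have h1 : k₀ + 1 ≤ k₁ := by omega
      have h2 : ((k₀:ℝ)) + 1 ≤ (k₁:ℝ) := by exact_mod_cast h1
      rw [min_eq_left hle]
      constructor <;> linarith
    · right
      have h1 : k₁ + 1 ≤ k₀ := by omega
      have h2 : ((k₁:ℝ)) + 1 ≤ (k₀:ℝ) := by exact_mod_cast h1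
      rw [min_eq_right hle]
      constructor <;> linarith
  have hsub := intermediate_value_uIcc (a := (0:ℝ)) (b := (t:ℝ)) (f := w) hwc.continuousOn
  obtain ⟨s, _, hs⟩ := hsub hmem
  obtain ⟨k, hk⟩ := hint s
  rw [hk] at hs
  have : (2*k : ℝ) = 2 * (min k₀ k₁ : ℤ) + 1 := by push_cast; push_cast at hs; linarith
  have : (2*k : ℤ) = 2 * (min k₀ k₁) + 1 := by exact_mod_cast this
  omega

/-- Scaling a point of the unit interval by a clamped factor. -/
def iscale (r : ℝ) (t : I) : I :=
  ⟨max 0 (min 1 r) * (t : ℝ), by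
    constructor
    · apply mul_nonneg (le_max_left _ _) t.2.1
    · calc max 0 (min 1 r) * (t : ℝ) ≤ 1 * 1 := by
            apply mul_le_mul _ t.2.2 t.2.1 zero_le_one
            exact max_le zero_le_one (min_le_left _ _)
      _ = 1 := mul_one 1⟩

lemma iscale_continuous (r : ℝ) : Continuous (iscale r) :=
  (continuous_const.mul continuous_induced_dom).subtype_mk _

lemma iscale_of_mem {r : ℝ} (h0 : 0 ≤ r) (h1 : r ≤ 1) (t : I) :
    (iscale r t : ℝ) = r * t := by
  simp only [iscale, min_eq_right h1, max_eq_right h0]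

/-- Every continuous map from the unit square to the circle `ℝ/ℤ` lifts to `ℝ`. -/
lemma sq_lift (F : I × I → AddCircle (1:ℝ)) (hF : Continuous F) :
    ∃ G : I × I → ℝ, Continuous G ∧ ∀ z, ((G z : ℝ) : AddCircle (1:ℝ)) = F z := by
  have hUC : UniformContinuous F := CompactSpace.uniformContinuous_of_continuous hF
  rw [Metric.uniformContinuous_iff] at hUC
  obtain ⟨δ, hδ, hδ'⟩ := hUC (1/2) (by norm_num)
  obtain ⟨N₀, hN₀⟩ := exists_nat_one_div_lt hδ
  set N : ℕ := N₀ + 1 with hN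
  have hNpos : 0 < (N:ℝ) := by positivity
  have hNlt : 1 / (N:ℝ) < δ := by rw [hN]; push_cast; exact hN₀
  set sg : ℕ → I × I → I × I := fun k z => (iscale ((k:ℝ)/N) z.1, iscale ((k:ℝ)/N) z.2)
    with hsg
  have hsgcont : ∀ k, Continuous (sg k) := fun k =>
    ((iscale_continuous _).comp continuous_fst).prodMk
      ((iscale_continuous _).comp continuous_snd)
  have hmem : ∀ k, k ≤ N → 0 ≤ (k:ℝ)/N ∧ (k:ℝ)/N ≤ 1 := by
    intro k hk
    constructor
    · positivity
    · rw [div_le_one hNpos]; exact_mod_cast hk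
  have hsg0 : ∀ z, sg 0 z = ((0, 0) : I × I) := by
    intro z
    refine Prod.ext (Subtype.ext ?_) (Subtype.ext ?_)
    all_goals
      show (iscale (((0:ℕ):ℝ)/N) _ : ℝ) = ((0 : I) : ℝ)
      rw [iscale_of_mem (hmem 0 (Nat.zero_le N)).1 (hmem 0 (Nat.zero_le N)).2]
      push_cast
      ring
  have hsgN : ∀ z, sg N z = z := by
    intro z
    have hNN : ((N:ℕ):ℝ)/(N:ℝ) = 1 := div_self (ne_of_gt hNpos)
    refine Prod.ext (Subtype.ext ?_) (Subtype.ext ?_)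
    all_goals
      show (iscale (((N:ℕ):ℝ)/N) _ : ℝ) = _
      rw [iscale_of_mem (hmem N le_rfl).1 (hmem N le_rfl).2, hNN, one_mul]
  have hdist : ∀ z, ∀ k, k < N → dist (F (sg (k+1) z)) (F (sg k z)) < 1/2 := by
    intro z k hk
    apply hδ'
    have key : ∀ t : I, dist (iscale (((k:ℕ)+1:ℝ)/N) t) (iscale ((k:ℝ)/N) t) < δ := by
      intro t
      rw [Subtype.dist_eq]
      rw [iscale_of_mem (by positivity) (by
          rw [div_le_one hNpos]; exact_mod_cast hk)]
      rw [iscale_of_mem (hmem k hk.le).1 (hmem k hk.le).2]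
      rw [Real.dist_eq]
      have ht0 := t.2.1
      have ht1 := t.2.2
      have : ((k:ℝ)+1)/N * t - (k:ℝ)/N * t = t / N := by ring
      rw [this, abs_of_nonneg (by positivity)]
      calc (t:ℝ) / N ≤ 1 / N := by gcongr
      _ < δ := hNlt
    rw [Prod.dist_eq]
    apply max_lt
    · have := key z.1
      convert this using 3 <;> push_cast <;> rfl
    · have := key z.2
      convert this using 3 <;> push_cast <;> rfl
  set G : I × I → ℝ := fun z =>
    dlt (F (0, 0)) + ∑ k ∈ Finset.range N, dlt (F (sg (k+1) z) - F (sg k z)) with hG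
  refine ⟨G, ?_, ?_⟩
  · apply continuous_const.add
    apply continuous_finset_sum
    intro k hk
    rw [Finset.mem_range] at hk
    have hw : Continuous fun z => F (sg (k+1) z) - F (sg k z) :=
      ((hF.comp (hsgcont (k+1))).sub (hF.comp (hsgcont k)))
    rw [continuous_iff_continuousAt]
    intro z
    have : ContinuousAt dlt (F (sg (k+1) z) - F (sg k z)) := by
      apply dlt_continuousAt
      apply ne_half_of_norm_lt
      rw [← dist_eq_norm]
      exact hdist z k hk
    exact ContinuousAt.comp (g := dlt)
      (f := fun z => F (sg (k+1) z) - F (sg k z)) this hw.continuousAt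
  · intro z
    set mkh : ℝ →+ AddCircle (1:ℝ) := QuotientAddGroup.mk' _ with hmkh
    have hcoe : ∀ x : ℝ, ((x : ℝ) : AddCircle (1:ℝ)) = mkh x := fun x => rfl
    rw [hcoe, hG]
    simp only [map_add, map_sum]
    have h1 : mkh (dlt (F (0,0))) = F (0,0) := by rw [← hcoe]; exact dlt_coe _
    have h2 : ∀ k, mkh (dlt (F (sg (k+1) z) - F (sg k z))) = F (sg (k+1) z) - F (sg k z) :=
      fun k => by rw [← hcoe]; exact dlt_coe _
    rw [h1]
    rw [Finset.sum_congr rfl (fun k _ => h2 k)]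
    rw [Finset.sum_range_sub (fun k => F (sg k z))]
    rw [hsgN, hsg0]
    abel

/-! ### The circle-valued map on the comb -/

section CircleMap

/-- Clamped affine interpolation between the teeth `1/(n+1)` and `1/n`. -/
def lam (n : ℕ) (x : ℝ) : ℝ := max 0 (min 1 ((x - 1/(n+1)) / (1/n - 1/(n+1))))

lemma lam_continuous (n : ℕ) : Continuous (lam n) := by
  unfold lam
  fun_prop

lemma lam_nonneg (n : ℕ) (x : ℝ) : 0 ≤ lam n x := le_max_left _ _

lemma lam_le_one (n : ℕ) (x : ℝ) : lam n x ≤ 1 :=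
  max_le zero_le_one (min_le_left _ _)

lemma cd_pos {n : ℕ} (hn : 1 ≤ n) : (0:ℝ) < 1/n - 1/(n+1) := by
  have h1 : (1:ℝ) ≤ (n:ℝ) := by exact_mod_cast hn
  rw [sub_pos]
  apply div_lt_div_of_pos_left one_pos (by linarith) (by linarith)

lemma lam_of_le {n : ℕ} (hn : 1 ≤ n) {x : ℝ} (hx : x ≤ 1/(n+1)) : lam n x = 0 := by
  unfold lam
  have h1 : (x - 1/(n+1)) / (1/n - 1/(n+1)) ≤ 0 :=
    div_nonpos_of_nonpos_of_nonneg (by linarith) (cd_pos hn).le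
  rw [min_eq_right (by linarith), max_eq_left h1]

lemma lam_of_ge {n : ℕ} (hn : 1 ≤ n) {x : ℝ} (hx : 1/(n:ℝ) ≤ x) : lam n x = 1 := by
  unfold lam
  have h1 : (1:ℝ) ≤ (x - 1/(n+1)) / (1/n - 1/(n+1)) := by
    rw [le_div_iff₀ (cd_pos hn)]
    linarith
  rw [min_eq_left h1, max_eq_right zero_le_one]

lemma lam_zero {n : ℕ} (hn : 1 ≤ n) : lam n 0 = 0 :=
  lam_of_le hn (by positivity)

lemma lam_V {n : ℕ} (hn : 1 ≤ n) {x : ℝ} (hx : x ∈ Vset) :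
    lam n x = 0 ∨ lam n x = 1 := by
  rcases hx with rfl | ⟨m, hm, rfl⟩
  · exact Or.inl (lam_zero hn)
  · rcases le_or_gt m n with h | h
    · refine Or.inr (lam_of_ge hn ?_)
      have h1 : (0:ℝ) < m := by exact_mod_cast Nat.lt_of_lt_of_le Nat.zero_lt_one hm
      have h2 : (m:ℝ) ≤ n := by exact_mod_cast h
      apply one_div_le_one_div_of_le h1 h2
    · refine Or.inl (lam_of_le hn ?_)
      have h1 : ((n:ℝ)+1) ≤ (m:ℝ) := by exact_mod_cast h
      have h2 : (0:ℝ) < (n:ℝ)+1 := by positivity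
      apply one_div_le_one_div_of_le h2 h1

/-- Lower-half chart of the circle map. -/
def glow (n : ℕ) (z : ℝ × ℝ) : ℝ :=
  (1 - 2*z.2) * ((4 - lam n z.1)/4) + 2*z.2 * (9/8 - lam n z.1/2)

/-- Upper-half chart of the circle map. -/
def gup (n : ℕ) (z : ℝ × ℝ) : ℝ :=
  (2 - 2*z.2) * (1/8 + lam n z.1/2) + (2*z.2 - 1) * ((1 + lam n z.1)/4)

/-- The circle-valued map on the comb that detects the `n`-th rectangle. -/
def cf (n : ℕ) (z : ↥comb) : AddCircle (1:ℝ) :=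
  if ((z : ℝ × ℝ)).2 ≤ 1/2 then ((glow n z : ℝ) : AddCircle (1:ℝ))
  else ((gup n z : ℝ) : AddCircle (1:ℝ))

lemma cf_continuous {n : ℕ} (hn : 1 ≤ n) : Continuous (cf n) := by
  unfold cf
  apply Continuous.if_le
  · apply Continuous.comp continuous_quotient_mk'
    unfold glow
    have := lam_continuous n
    fun_prop
  · apply Continuous.comp continuous_quotient_mk'
    unfold gup
    have := lam_continuous n
    fun_prop
  · exact continuous_snd.comp continuous_subtype_val
  · exact continuous_const
  · intro z hz
    have hx : ((z : ℝ × ℝ)).1 ∈ Vset :=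
      comb_vert_of z.2 (by rw [hz]; norm_num) (by rw [hz]; norm_num)
    apply coe_eq_coe_iff_exists_int.mpr
    rcases lam_V hn hx with h | h
    · exact ⟨1, by unfold glow gup; rw [h, hz]; push_cast; ring⟩
    · exact ⟨0, by unfold glow gup; rw [h, hz]; push_cast; ring⟩

lemma cf_lam0 {n : ℕ} (z : ↥comb) (h : lam n ((z : ℝ × ℝ)).1 = 0) :
    cf n z = ((((z : ℝ × ℝ)).2/4 : ℝ) : AddCircle (1:ℝ)) := by
  unfold cf
  split
  · apply coe_eq_coe_iff_exists_int.mpr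
    exact ⟨1, by unfold glow; rw [h]; push_cast; ring⟩
  · apply congrArg
    unfold gup; rw [h]; ring

lemma cf_lam1 {n : ℕ} (z : ↥comb) (h : lam n ((z : ℝ × ℝ)).1 = 1) :
    cf n z = ((((3 - ((z : ℝ × ℝ)).2)/4 : ℝ)) : AddCircle (1:ℝ)) := by
  unfold cf
  split
  · apply congrArg; unfold glow; rw [h]; ring
  · apply congrArg; unfold gup; rw [h]; ring

lemma cf_bottom {n : ℕ} (z : ↥comb) (h : ((z : ℝ × ℝ)).2 = 0) :
    cf n z = ((((4 - lam n ((z : ℝ × ℝ)).1)/4 : ℝ)) : AddCircle (1:ℝ)) := by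
  unfold cf
  rw [if_pos (by rw [h]; norm_num)]
  apply congrArg; unfold glow; rw [h]; ring

lemma cf_top {n : ℕ} (z : ↥comb) (h : ((z : ℝ × ℝ)).2 = 1) :
    cf n z = ((((1 + lam n ((z : ℝ × ℝ)).1)/4 : ℝ)) : AddCircle (1:ℝ)) := by
  unfold cf
  rw [if_neg (by rw [h]; norm_num)]
  apply congrArg; unfold gup; rw [h]; ring

end CircleMap

/-! ### The rectangle loops -/

section Loops

/-- Vertical coordinate of the rectangle loop. -/
def Yf (t : ℝ) : ℝ := max 0 (min 1 (min (4*t) (3 - 4*t)))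

/-- Horizontal profile of the rectangle loop. -/
def Gf (t : ℝ) : ℝ := max 0 (min 1 (min (4*t - 1) (4 - 4*t)))

lemma Yf_continuous : Continuous Yf := by unfold Yf; fun_prop

lemma Gf_continuous : Continuous Gf := by unfold Gf; fun_prop

lemma Yf_mem (t : ℝ) : Yf t ∈ Set.Icc (0:ℝ) 1 :=
  ⟨le_max_left _ _, max_le zero_le_one (min_le_left _ _)⟩

lemma Gf_mem (t : ℝ) : Gf t ∈ Set.Icc (0:ℝ) 1 :=
  ⟨le_max_left _ _, max_le zero_le_one (min_le_left _ _)⟩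

lemma Yf_leg1 {t : ℝ} (h0 : 0 ≤ t) (h1 : t ≤ 1/4) : Yf t = 4*t := by
  unfold Yf
  rw [show min (4*t) (3 - 4*t) = 4*t from min_eq_left (by linarith),
    min_eq_right (by linarith), max_eq_right (by linarith)]

lemma Yf_leg2 {t : ℝ} (h0 : 1/4 ≤ t) (h1 : t ≤ 1/2) : Yf t = 1 := by
  unfold Yf
  rcases le_total t (3/8 : ℝ) with h | h
  · rw [show min (4*t) (3 - 4*t) = 4*t from min_eq_left (by linarith),
      min_eq_left (by linarith), max_eq_right (by linarith)]
  · rw [show min (4*t) (3 - 4*t) = 3 - 4*t from min_eq_right (by linarith),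
      min_eq_left (by linarith), max_eq_right (by linarith)]

lemma Yf_leg3 {t : ℝ} (h0 : 1/2 ≤ t) (h1 : t ≤ 3/4) : Yf t = 3 - 4*t := by
  unfold Yf
  rw [show min (4*t) (3 - 4*t) = 3 - 4*t from min_eq_right (by linarith),
    min_eq_right (by linarith), max_eq_right (by linarith)]

lemma Yf_leg4 {t : ℝ} (h0 : 3/4 ≤ t) : Yf t = 0 := by
  unfold Yf
  rw [show min (4*t) (3 - 4*t) = 3 - 4*t from min_eq_right (by linarith),
    min_eq_right (by linarith), max_eq_left (by linarith)]

lemma Gf_leg1 {t : ℝ} (h1 : t ≤ 1/4) : Gf t = 0 := by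
  unfold Gf
  rw [show min (4*t - 1) (4 - 4*t) = 4*t - 1 from min_eq_left (by linarith),
    min_eq_right (by linarith), max_eq_left (by linarith)]

lemma Gf_leg2 {t : ℝ} (h0 : 1/4 ≤ t) (h1 : t ≤ 1/2) : Gf t = 4*t - 1 := by
  unfold Gf
  rw [show min (4*t - 1) (4 - 4*t) = 4*t - 1 from min_eq_left (by linarith),
    min_eq_right (by linarith), max_eq_right (by linarith)]

lemma Gf_leg3 {t : ℝ} (h0 : 1/2 ≤ t) (h1 : t ≤ 3/4) : Gf t = 1 := by
  unfold Gf
  rcases le_total t (5/8 : ℝ) with h | h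
  · rw [show min (4*t - 1) (4 - 4*t) = 4*t - 1 from min_eq_left (by linarith),
      min_eq_left (by linarith), max_eq_right (by linarith)]
  · rw [show min (4*t - 1) (4 - 4*t) = 4 - 4*t from min_eq_right (by linarith),
      min_eq_left (by linarith), max_eq_right (by linarith)]

lemma Gf_leg4 {t : ℝ} (h0 : 3/4 ≤ t) (h1 : t ≤ 1) : Gf t = 4 - 4*t := by
  unfold Gf
  rw [show min (4*t - 1) (4 - 4*t) = 4 - 4*t from min_eq_right (by linarith),
    min_eq_right (by linarith), max_eq_right (by linarith)]

lemma combLoop_mem {c : ℝ} (hc : c ∈ Vset) {t : ℝ} (h0 : 0 ≤ t) (h1 : t ≤ 1) :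
    (c * Gf t, Yf t) ∈ comb := by
  have hc01 := Vset_subset_Icc hc
  have hprod : c * Gf t ∈ Set.Icc (0:ℝ) 1 := by
    have h2 := Gf_mem t
    simp only [Set.mem_Icc] at hc01 h2 ⊢
    constructor
    · exact mul_nonneg hc01.1 h2.1
    · calc c * Gf t ≤ 1 * 1 := mul_le_mul hc01.2 h2.2 h2.1 zero_le_one
      _ = 1 := mul_one 1
  rcases le_total t (1/4 : ℝ) with h | h
  · rw [Gf_leg1 h, mul_zero]
    exact mem_comb_vert (Or.inl rfl) (Yf_mem t)
  rcases le_total t (1/2 : ℝ) with h' | h'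
  · rw [Yf_leg2 h h']
    exact mem_comb_top hprod
  rcases le_total t (3/4 : ℝ) with h'' | h''
  · rw [Gf_leg3 h' h'', mul_one]
    exact mem_comb_vert hc (Yf_mem t)
  · rw [Yf_leg4 h'']
    exact mem_comb_bottom hprod

/-- The loop around the rectangle over `[0, c]`. -/
def combLoop (c : ℝ) (hc : c ∈ Vset) : Path combP combP where
  toFun t := ⟨(c * Gf t, Yf t), combLoop_mem hc t.2.1 t.2.2⟩
  continuous_toFun := by
    apply Continuous.subtype_mk
    exact ((continuous_const.mul (Gf_continuous.comp continuous_induced_dom)).prodMk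
      (Yf_continuous.comp continuous_induced_dom))
  source' := by
    refine Subtype.ext ?_
    show (c * Gf 0, Yf 0) = ((0:ℝ), (0:ℝ))
    rw [Gf_leg1 (by norm_num), Yf_leg1 le_rfl (by norm_num), mul_zero, mul_zero]
  target' := by
    refine Subtype.ext ?_
    show (c * Gf 1, Yf 1) = ((0:ℝ), (0:ℝ))
    rw [Gf_leg4 (by norm_num) le_rfl, Yf_leg4 (by norm_num)]
    norm_num

lemma combLoop_coe (c : ℝ) (hc : c ∈ Vset) (t : I) :
    ((combLoop c hc t : ↥comb) : ℝ × ℝ) = (c * Gf t, Yf t) := rfl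

end Loops

/-! ### Explicit lifts along the loops -/

section Lifts

/-- An explicit continuous lift of `cf n ∘ combLoop (1/n)`. -/
def Af (n : ℕ) (t : ℝ) : ℝ :=
  if t ≤ 1/4 then t
  else if t ≤ 1/2 then (1 + lam n ((1/n) * (4*t - 1)))/4
  else if t ≤ 3/4 then t
  else (4 - lam n ((1/n) * (4 - 4*t)))/4

lemma Af_continuous {n : ℕ} (hn : 1 ≤ n) : Continuous (Af n) := by
  have hlam := lam_continuous n
  have hc1 : Continuous fun t : ℝ => (1 + lam n ((1/n) * (4*t - 1)))/4 := by fun_prop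
  have hc2 : Continuous fun t : ℝ => (4 - lam n ((1/n) * (4 - 4*t)))/4 := by fun_prop
  have hinner : Continuous fun t : ℝ =>
      if t ≤ 3/4 then t else (4 - lam n ((1/n) * (4 - 4*t)))/4 := by
    apply Continuous.if_le continuous_id hc2 continuous_id continuous_const
    intro t ht
    simp only [id_eq] at ht
    subst ht
    rw [show (1:ℝ)/n * (4 - 4*(3/4)) = 1/n by ring, lam_of_ge hn le_rfl]
    norm_num
  have hmid : Continuous fun t : ℝ =>
      if t ≤ 1/2 then (1 + lam n ((1/n) * (4*t - 1)))/4
      else if t ≤ 3/4 then t else (4 - lam n ((1/n) * (4 - 4*t)))/4 := by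
    apply Continuous.if_le hc1 hinner continuous_id continuous_const
    intro t ht
    simp only [id_eq] at ht
    subst ht
    rw [if_pos (by norm_num : (1:ℝ)/2 ≤ 3/4)]
    rw [show (1:ℝ)/n * (4*(1/2) - 1) = 1/n by ring, lam_of_ge hn le_rfl]
    norm_num
  unfold Af
  apply Continuous.if_le continuous_id hmid continuous_id continuous_const
  intro t ht
  simp only [id_eq] at ht
  subst ht
  rw [if_pos (by norm_num : (1:ℝ)/4 ≤ 1/2)]
  rw [show (1:ℝ)/n * (4*(1/4) - 1) = 0 by ring, lam_zero hn]
  norm_num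

lemma Af_zero {n : ℕ} : Af n 0 = 0 := by
  unfold Af
  rw [if_pos (by norm_num)]

lemma Af_one {n : ℕ} (hn : 1 ≤ n) : Af n 1 = 1 := by
  unfold Af
  rw [if_neg (by norm_num), if_neg (by norm_num), if_neg (by norm_num)]
  have : (1:ℝ)/n * (4 - 4*1) = 0 := by ring
  rw [this, lam_zero hn]
  norm_num

lemma hmemV (n : ℕ) (hn : 1 ≤ n) : (1:ℝ)/n ∈ Vset := Or.inr ⟨n, hn, rfl⟩

lemma hmem0V : (0:ℝ) ∈ Vset := Or.inl rfl

/-- `Af n` is a lift of `cf n` along the loop `combLoop (1/n)`. -/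
lemma Af_lift {n : ℕ} (hn : 1 ≤ n) (t : I) :
    ((Af n (t:ℝ) : ℝ) : AddCircle (1:ℝ)) = cf n (combLoop ((1:ℝ)/n) (hmemV n hn) t) := by
  have h0 := t.2.1
  have h1 := t.2.2
  set z : ↥comb := combLoop ((1:ℝ)/n) (hmemV n hn) t with hz
  have hz1 : ((z : ℝ × ℝ)).1 = (1:ℝ)/n * Gf (t:ℝ) := rfl
  have hz2 : ((z : ℝ × ℝ)).2 = Yf (t:ℝ) := rfl
  unfold Af
  rcases le_or_gt (t:ℝ) (1/4 : ℝ) with ht | ht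
  · rw [if_pos ht]
    rw [cf_lam0 z (by rw [hz1, Gf_leg1 ht, mul_zero, lam_zero hn])]
    rw [hz2, Yf_leg1 h0 ht]
    apply congrArg
    ring
  rcases le_or_gt (t:ℝ) (1/2 : ℝ) with ht' | ht'
  · rw [if_neg (not_le.mpr ht), if_pos ht']
    rw [cf_top z (by rw [hz2, Yf_leg2 ht.le ht'])]
    rw [hz1, Gf_leg2 ht.le ht']
  rcases le_or_gt (t:ℝ) (3/4 : ℝ) with ht'' | ht''
  · rw [if_neg (not_le.mpr ht), if_neg (not_le.mpr ht'), if_pos ht'']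
    have hl1 : lam n ((z : ℝ × ℝ)).1 = 1 := by
      rw [hz1, Gf_leg3 ht'.le ht'', mul_one]
      exact lam_of_ge hn le_rfl
    rw [cf_lam1 z hl1]
    rw [hz2, Yf_leg3 ht'.le ht'']
    apply congrArg
    ring
  · rw [if_neg (not_le.mpr ht), if_neg (not_le.mpr ht'), if_neg (not_le.mpr ht'')]
    rw [cf_bottom z (by rw [hz2, Yf_leg4 ht''.le])]
    rw [hz1, Gf_leg4 ht''.le h1]

/-- `Yf/4` is a lift of `cf n` along the degenerate loop `combLoop 0`. -/
lemma Yf_lift {n : ℕ} (hn : 1 ≤ n) (t : I) :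
    ((Yf (t:ℝ)/4 : ℝ) : AddCircle (1:ℝ)) = cf n (combLoop 0 hmem0V t) := by
  set z : ↥comb := combLoop 0 hmem0V t with hz
  have hz1 : ((z : ℝ × ℝ)).1 = 0 * Gf (t:ℝ) := rfl
  have hz2 : ((z : ℝ × ℝ)).2 = Yf (t:ℝ) := rfl
  rw [cf_lam0 z (by rw [hz1, zero_mul, lam_zero hn]), hz2]

end Lifts

/-! ### The rectangle loops are not null-homotopic -/

lemma combLoop_not_homotopic {n : ℕ} (hn : 1 ≤ n) :
    ¬ (combLoop ((1:ℝ)/n) (hmemV n hn)).Homotopic (combLoop 0 hmem0V) := by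
  rintro ⟨H⟩
  set F : I × I → AddCircle (1:ℝ) := fun z => cf n (H z) with hF
  have hFc : Continuous F := (cf_continuous hn).comp H.toHomotopy.continuous
  obtain ⟨G, hGc, hG⟩ := sq_lift F hFc
  have hc1 : ((1:I):ℝ) = (1:ℝ) := rfl
  have hc0 : ((0:I):ℝ) = (0:ℝ) := rfl
  -- bottom edge of the homotopy: the loop `combLoop (1/n)`
  have e1 : G (0, 1) - G (0, 0) = 1 := by
    have hu : Continuous fun t : I => G (0, t) :=
      hGc.comp (continuous_const.prodMk continuous_id)
    have hv : Continuous fun t : I => Af n (t : ℝ) :=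
      (Af_continuous hn).comp continuous_induced_dom
    have hlift : ∀ t : I, ((G (0, t) : ℝ) : AddCircle (1:ℝ)) = ((Af n (t:ℝ) : ℝ) :
        AddCircle (1:ℝ)) := by
      intro t
      rw [hG (0, t), hF, Af_lift hn t]
      exact congrArg (cf n) (H.apply_zero t)
    have := lift_diff_const hu hv hlift 1
    rw [hc1, hc0, Af_one hn, Af_zero] at this
    linarith
  -- top edge of the homotopy: the degenerate loop
  have e2 : G (1, 1) - G (1, 0) = 0 := by
    have hu : Continuous fun t : I => G (1, t) :=
      hGc.comp (continuous_const.prodMk continuous_id)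
    have hv : Continuous fun t : I => Yf (t : ℝ)/4 :=
      ((Yf_continuous.comp continuous_induced_dom).div_const 4)
    have hlift : ∀ t : I, ((G (1, t) : ℝ) : AddCircle (1:ℝ)) = ((Yf (t:ℝ)/4 : ℝ) :
        AddCircle (1:ℝ)) := by
      intro t
      rw [hG (1, t), hF, Yf_lift hn t]
      exact congrArg (cf n) (H.apply_one t)
    have := lift_diff_const hu hv hlift 1
    rw [hc1, hc0, Yf_leg4 (by norm_num), Yf_leg1 le_rfl (by norm_num)] at this
    linarith
  -- the two vertical sides are constant
  have side : ∀ b : I, (∀ s : I, H (s, b) = combP) → G (1, b) = G (0, b) := by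
    intro b hb
    have hu : Continuous fun s : I => G (s, b) :=
      hGc.comp (continuous_id.prodMk continuous_const)
    have hv : Continuous fun _ : I => G (0, b) := continuous_const
    have hlift : ∀ s : I, ((G (s, b) : ℝ) : AddCircle (1:ℝ)) = ((G (0, b) : ℝ) :
        AddCircle (1:ℝ)) := by
      intro s
      rw [hG (s, b), hG (0, b), hF]
      exact congrArg (cf n) ((hb s).trans (hb 0).symm)
    have := lift_diff_const hu hv hlift 1
    linarith
  have side0 : G (1, 0) = G (0, 0) := side 0 fun s => H.source s
  have side1 : G (1, 1) = G (0, 1) := side 1 fun s => H.target s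
  linarith

/-! ### Joined loops in path space are homotopic -/

lemma homotopic_of_joined {X : Type*} [TopologicalSpace X] {a b : X} {γ γ' : Path a b}
    (h : Joined γ γ') : γ.Homotopic γ' := by
  obtain ⟨ρ⟩ := h
  refine ⟨{ toFun := fun p => ρ p.1 p.2
            continuous_toFun := ?_
            map_zero_left := ?_
            map_one_left := ?_
            prop' := ?_ }⟩
  · exact continuous_eval.comp ((ρ.continuous.comp continuous_fst).prodMk continuous_snd)
  · intro t
    show ρ 0 t = γ t
    rw [ρ.source]
  · intro t
    show ρ 1 t = γ' t
    rw [ρ.target]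
  · intro s t ht
    rcases ht with rfl | ht
    · show ρ s 0 = γ 0
      rw [(ρ s).source, γ.source]
    · rcases ht with rfl
      show ρ s 1 = γ 1
      rw [(ρ s).target, γ.target]

/-! ### Convergence of the rectangle loops -/

lemma memV' (n : ℕ) : (1:ℝ)/(n:ℝ) ∈ Vset := by
  rcases Nat.eq_zero_or_pos n with rfl | hn
  · left; simp
  · exact Or.inr ⟨n, hn, rfl⟩

lemma combLoop_tendsto :
    Tendsto (fun n : ℕ => combLoop ((1:ℝ)/n) (memV' n)) atTop (𝓝 (combLoop 0 hmem0V)) := by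
  have hind : IsInducing (fun γ : Path combP combP => γ.toContinuousMap) := ⟨rfl⟩
  rw [hind.tendsto_nhds_iff]
  apply tendsto_iff_dist_tendsto_zero.mpr
  apply squeeze_zero (fun n => dist_nonneg) (g := fun n : ℕ => 1/(n:ℝ))
  · intro n
    apply ContinuousMap.dist_le_iff_of_nonempty.mpr
    intro t
    show dist (combLoop ((1:ℝ)/n) (memV' n) t) (combLoop 0 hmem0V t) ≤ 1/(n:ℝ)
    rw [Subtype.dist_eq]
    rw [show ((combLoop ((1:ℝ)/n) (memV' n) t : ↥comb) : ℝ × ℝ) = ((1:ℝ)/n * Gf t, Yf t)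
      from rfl]
    rw [show ((combLoop 0 hmem0V t : ↥comb) : ℝ × ℝ) = ((0:ℝ) * Gf t, Yf t) from rfl]
    rw [Prod.dist_eq]
    have h2 : dist (Yf (t:ℝ)) (Yf (t:ℝ)) = 0 := dist_self _
    have h1 : dist ((1:ℝ)/n * Gf t) ((0:ℝ) * Gf t) ≤ 1/(n:ℝ) := by
      rw [Real.dist_eq, zero_mul, sub_zero]
      have hG := Gf_mem (t:ℝ)
      simp only [Set.mem_Icc] at hG
      have hn : (0:ℝ) ≤ 1/(n:ℝ) := by positivity
      rw [abs_of_nonneg (mul_nonneg hn hG.1)]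
      calc (1:ℝ)/n * Gf t ≤ 1/n * 1 := by
            apply mul_le_mul_of_nonneg_left hG.2 hn
      _ = 1/n := mul_one _
    rw [h2]
    exact max_le h1 (by positivity)
  · exact tendsto_one_div_atTop_nhds_zero_nat

/-! ### Main theorem -/

/-- The topological fundamental group of the comb space is not discrete, even though the
comb space is semilocally simply connected at every point. -/
theorem stmt3 : ¬ DiscreteTopology (ZerothHomotopy (Path combP combP)) ∧
    ∀ x : comb, SemilocallySimplyConnectedAt ↥comb x := by
  constructor
  · intro hdisc
    set q : Path combP combP → ZerothHomotopy (Path combP combP) :=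
      @Quotient.mk' _ (pathSetoid _) with hq
    have hqc : Continuous q := continuous_quotient_mk'
    set ℓ₀ : Path combP combP := combLoop 0 hmem0V with hℓ₀
    have hopen : IsOpen (q ⁻¹' {q ℓ₀}) := hqc.isOpen_preimage _ (isOpen_discrete _)
    have hev : ∀ᶠ n : ℕ in atTop, combLoop ((1:ℝ)/n) (memV' n) ∈ q ⁻¹' {q ℓ₀} :=
      combLoop_tendsto.eventually (hopen.mem_nhds (by exact rfl))
    obtain ⟨n, hn1, hmemn⟩ := (hev.and (eventually_ge_atTop 1)).exists
    have hJ : Joined (combLoop ((1:ℝ)/n) (memV' n)) ℓ₀ := Quotient.exact' hn1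
    exact combLoop_not_homotopic hmemn (homotopic_of_joined hJ)
  · exact comb_slsc
end
end

section
/- The countably infinite product X = S¹ × S¹ × ⋯ of circles has totally disconnected topological fundamental group π₁(X,p) (where p is any basepoint), but X is not semilocally simply connected at p. -/
open Topology Filter unitInterval

instance ZerothHomotopy.instTopologicalSpaceQuot (X : Type*) [TopologicalSpace X] :
    TopologicalSpace (ZerothHomotopy X) :=
  inferInstanceAs (TopologicalSpace (Quotient _))

/-- The basepoint `(1,1,1,...)` of the infinite torus `S¹ × S¹ × ⋯`. -/
noncomputable def circleP : ∀ _ : ℕ, Circle := fun _ => 1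

/-! ### Auxiliary lemmas -/

private lemma mem_slitPlane_of_ne_negOne {u : Circle} (h : (u : ℂ) ≠ -1) :
    (u : ℂ) ∈ Complex.slitPlane := by
  rw [Complex.mem_slitPlane_iff]
  by_contra hc
  push_neg at hc
  refine h ?_
  have hn : Complex.normSq u = 1 := u.normSq_coe
  rw [Complex.normSq_apply, hc.2, mul_zero, add_zero] at hn
  have hre : (u : ℂ).re = -1 := by nlinarith [hc.1]
  exact Complex.ext (by simpa using hre) (by simpa using hc.2)

private lemma ratio_ne_negOne_of_dist_lt {z w : Circle} (h : dist z w < 2) :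
    ((z / w : Circle) : ℂ) ≠ -1 := by
  intro he
  rw [Circle.coe_div, div_eq_iff (Circle.coe_ne_zero w)] at he
  rw [show dist z w = dist (z : ℂ) (w : ℂ) from rfl, Complex.dist_eq, he] at h
  have h2 : (-1 : ℂ) * w - w = -(2 * (w : ℂ)) := by ring
  rw [h2, norm_neg, norm_mul, Circle.norm_coe, mul_one] at h
  norm_num at h

private lemma continuous_argRatio {Y : Type*} [TopologicalSpace Y] {f g : Y → Circle}
    (hf : Continuous f) (hg : Continuous g) (h : ∀ y, ((f y / g y : Circle) : ℂ) ≠ -1) :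
    Continuous fun y => Complex.arg ((f y / g y : Circle) : ℂ) := by
  rw [continuous_iff_continuousAt]
  intro y
  have h1 : Continuous fun y => ((f y / g y : Circle) : ℂ) :=
    continuous_subtype_val.comp (hf.div' hg)
  exact ContinuousAt.comp (f := fun y => ((f y / g y : Circle) : ℂ))
    (Complex.continuousAt_arg (mem_slitPlane_of_ne_negOne (h y))) h1.continuousAt

/-- Two loops in the circle that are never antipodal are homotopic rel endpoints. -/
private lemma homotopic_of_close {α β : Path (1 : Circle) 1}
    (h : ∀ t, ((β t / α t : Circle) : ℂ) ≠ -1) : α.Homotopic β := by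
  refine ⟨{ toFun := fun q =>
              α q.2 * Circle.exp ((q.1 : ℝ) * Complex.arg ((β q.2 / α q.2 : Circle) : ℂ))
            continuous_toFun := ?_
            map_zero_left := ?_
            map_one_left := ?_
            prop' := ?_ }⟩
  · exact (α.continuous.comp continuous_snd).mul
      (Circle.exp.continuous.comp ((continuous_subtype_val.comp continuous_fst).mul
        (continuous_argRatio (β.continuous.comp continuous_snd)
          (α.continuous.comp continuous_snd) fun q => h q.2)))
  · intro t
    simp [Circle.exp_zero]
  · intro t
    simp only [Set.Icc.coe_one, one_mul, Circle.exp_arg, Path.coe_toContinuousMap]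
    rw [mul_comm]
    simp
  · intro t x hx
    simp only [ContinuousMap.coe_mk]
    rcases hx with rfl | hx
    · simp [Complex.arg_one, Circle.exp_zero]
    · rw [Set.mem_singleton_iff] at hx
      subst hx
      simp [Complex.arg_one, Circle.exp_zero]

/-- Being joined in the path space is the same as being path-homotopic. -/
private lemma joined_iff_homotopic {X : Type*} [TopologicalSpace X] {x y : X}
    {γ δ : Path x y} : Joined γ δ ↔ γ.Homotopic δ := by
  constructor
  · rintro ⟨P⟩
    refine ⟨{ toFun := fun q => P q.1 q.2
              continuous_toFun :=
                continuous_eval.comp ((P.continuous.comp continuous_fst).prodMk continuous_snd)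
              map_zero_left := fun t => by simp
              map_one_left := fun t => by simp
              prop' := fun t z hz => ?_ }⟩
    simp only [ContinuousMap.coe_mk]
    rcases hz with rfl | hz
    · simp
    · rw [Set.mem_singleton_iff] at hz; subst hz; simp
  · rintro ⟨H⟩
    refine ⟨⟨⟨fun s => H.eval s, ?_⟩, H.eval_zero, H.eval_one⟩⟩
    apply continuous_induced_rng.2
    have he : ((↑) : Path x y → C(I, X)) ∘ (fun s => H.eval s) = fun s => H.toHomotopy.curry s := by
      funext s
      ext t
      rfl
    rw [he]
    exact H.toHomotopy.curry.continuous

/-- Each `Joined`-class in the loop space of the circle is open. -/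
private lemma isOpen_joinedClass (γ : Path (1 : Circle) 1) :
    IsOpen {δ : Path (1 : Circle) 1 | Joined γ δ} := by
  rw [isOpen_iff_forall_mem_open]
  intro δ hδ
  refine ⟨((↑) : Path (1 : Circle) 1 → C(I, Circle)) ⁻¹' Metric.ball (δ : C(I, Circle)) 2,
    ?_, Metric.isOpen_ball.preimage continuous_induced_dom, ?_⟩
  · intro η hη
    rw [Set.mem_preimage, Metric.mem_ball] at hη
    refine hδ.trans (joined_iff_homotopic.2 (homotopic_of_close fun t => ?_))
    exact ratio_ne_negOne_of_dist_lt
      (lt_of_le_of_lt (ContinuousMap.dist_apply_le_dist t) hη)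
  · simp [Metric.mem_ball]

private lemma discreteCircleLoops :
    DiscreteTopology (ZerothHomotopy (Path (1 : Circle) 1)) := by
  rw [discreteTopology_iff_isOpen_singleton]
  intro a
  obtain ⟨γ, rfl⟩ := Quotient.exists_rep a
  have he : (Quotient.mk (pathSetoid (Path (1 : Circle) 1))) ⁻¹'
        {Quotient.mk (pathSetoid (Path (1 : Circle) 1)) γ}
      = {δ : Path (1 : Circle) 1 | Joined γ δ} := by
    ext δ
    simp only [Set.mem_preimage, Set.mem_singleton_iff, Set.mem_setOf_eq, Quotient.eq]
    exact ⟨fun h => h.symm, fun h => h.symm⟩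
  exact (isQuotientMap_quot_mk (r := (pathSetoid (Path (1 : Circle) 1)).r)).isOpen_preimage.1
    (he ▸ isOpen_joinedClass γ)

private lemma continuous_projQuot (n : ℕ) :
    Continuous fun γ : Path circleP circleP =>
      ((γ.map (continuous_apply n) : Path (1 : Circle) 1)) := by
  apply continuous_induced_rng.2
  have he : ((↑) : Path (1 : Circle) 1 → C(I, Circle)) ∘
      (fun γ : Path circleP circleP => (γ.map (continuous_apply n) : Path (1 : Circle) 1))
      = fun γ : Path circleP circleP =>
          (⟨fun f => f n, continuous_apply n⟩ : C((∀ _ : ℕ, Circle), Circle)).comp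
            (γ : C(I, ∀ _ : ℕ, Circle)) := by
    funext γ; ext t; rfl
  refine (congrArg Continuous he).mpr ?_
  exact (ContinuousMap.continuous_postcomp _).comp continuous_induced_dom

private lemma circle_exp_sum (f : ℕ → ℝ) (m : ℕ) :
    Circle.exp (∑ j ∈ Finset.range m, f j) = ∏ j ∈ Finset.range m, Circle.exp (f j) := by
  induction m with
  | zero => simp [Circle.exp_zero]
  | succ k ih => simp [Finset.sum_range_succ, Finset.prod_range_succ, Circle.exp_add, ih]

/-- The standard degree-one loop of the circle. -/
private noncomputable def ω : Path (1 : Circle) 1 :=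
  ⟨⟨fun t => Circle.exp (2 * Real.pi * t), by fun_prop⟩,
    by simp [Circle.exp_zero], by simp [Circle.exp_two_pi]⟩

private lemma omega_not_nullhomotopic : ¬ ω.Homotopic (Path.refl (1 : Circle)) := by
  rintro ⟨H⟩
  have hHc : Continuous fun q : I × I => H q := H.toHomotopy.continuous
  have hu := Metric.uniformContinuous_iff.1 (CompactSpace.uniformContinuous_of_continuous hHc)
  obtain ⟨d, hd, hdist⟩ := hu 2 (by norm_num)
  obtain ⟨N, hN⟩ := exists_nat_gt (max 3 (1 / d))
  have hN3 : (3 : ℝ) < N := lt_of_le_of_lt (le_max_left _ _) hN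
  have hNd : 1 / d < N := lt_of_le_of_lt (le_max_right _ _) hN
  have hN0 : (0 : ℝ) < N := by linarith
  have hNd' : 1 / (N : ℝ) < d := by
    rw [div_lt_iff₀ hN0]
    rw [div_lt_iff₀ hd] at hNd
    linarith
  -- the subdivision points
  set u : ℕ → I := fun j => Set.projIcc 0 1 zero_le_one (j / N) with hu_def
  have huval : ∀ j : ℕ, j ≤ N → (u j : ℝ) = j / N := by
    intro j hj
    have hmem : (j : ℝ) / N ∈ Set.Icc (0 : ℝ) 1 := by
      constructor
      · positivity
      · rw [div_le_one hN0]
        exact_mod_cast hj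
    show (↑(Set.projIcc 0 1 zero_le_one ((j : ℝ) / N)) : ℝ) = (j : ℝ) / N
    rw [Set.projIcc_of_mem _ hmem]
  have hclose : ∀ (s : I) (j : ℕ), j < N →
      dist (H (s, u (j + 1))) (H (s, u j)) < 2 := by
    intro s j hj
    apply hdist
    rw [Prod.dist_eq]
    have h1 : dist s s = 0 := dist_self s
    have h2 : dist (u (j + 1)) (u j) < d := by
      rw [Subtype.dist_eq, huval (j + 1) hj, huval j hj.le]
      rw [Real.dist_eq]
      have : ((j : ℝ) + 1) / N - j / N = 1 / N := by field_simp; ring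
      push_cast
      rw [this, abs_of_pos (by positivity)]
      exact hNd'
    rw [h1]
    exact max_lt hd h2
  set F : I × I → Circle := fun q => H q with hF_def
  have hF0 : ∀ t, F (0, t) = ω t := fun t => H.toHomotopy.apply_zero t
  have hF1 : ∀ t, F (1, t) = 1 := fun t => H.toHomotopy.apply_one t
  have hFs0 : ∀ s, F (s, 0) = 1 := fun s => H.source s
  have hFs1 : ∀ s, F (s, 1) = 1 := fun s => H.target s
  set W : I → ℝ := fun s => ∑ j ∈ Finset.range N,
    Complex.arg ((F (s, u (j + 1)) / F (s, u j) : Circle) : ℂ) with hW_def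
  have hne : ∀ (s : I) (j : ℕ), j < N →
      ((F (s, u (j + 1)) / F (s, u j) : Circle) : ℂ) ≠ -1 :=
    fun s j hj => ratio_ne_negOne_of_dist_lt (hclose s j hj)
  have hWcont : Continuous W := by
    apply continuous_finset_sum
    intro j hj
    rw [Finset.mem_range] at hj
    exact continuous_argRatio (hHc.comp (continuous_id.prodMk continuous_const))
      (hHc.comp (continuous_id.prodMk continuous_const)) fun s => hne s j hj
  have hu0 : u 0 = 0 := Subtype.ext (by rw [huval 0 (Nat.zero_le _)]; simp)
  have huN : u N = 1 := Subtype.ext (by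
    rw [huval N le_rfl]
    field_simp
    simp)
  have hexp : ∀ s : I, Circle.exp (W s) = 1 := by
    intro s
    rw [show W s = ∑ j ∈ Finset.range N,
        Complex.arg ((F (s, u (j + 1)) / F (s, u j) : Circle) : ℂ) from rfl, circle_exp_sum]
    have hterm : ∀ j ∈ Finset.range N,
        Circle.exp (Complex.arg ((F (s, u (j + 1)) / F (s, u j) : Circle) : ℂ))
        = F (s, u (j + 1)) / F (s, u j) := fun j _ => Circle.exp_arg _
    rw [Finset.prod_congr rfl hterm, Finset.prod_range_div (fun j => F (s, u j)) N]
    rw [hu0, huN, hFs0, hFs1]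
    simp
  have hW0 : W 0 = 2 * Real.pi := by
    have harg : ∀ j ∈ Finset.range N,
        Complex.arg ((F (0, u (j + 1)) / F (0, u j) : Circle) : ℂ) = 2 * Real.pi / N := by
      intro j hj
      rw [Finset.mem_range] at hj
      have hratio : (F (0, u (j + 1)) / F (0, u j) : Circle) = Circle.exp (2 * Real.pi / N) := by
        rw [hF0, hF0]
        show Circle.exp (2 * Real.pi * (u (j+1) : ℝ)) / Circle.exp (2 * Real.pi * (u j : ℝ)) = _
        rw [← Circle.exp_sub]
        congr 1
        rw [huval (j + 1) hj, huval j hj.le]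
        push_cast
        field_simp
        ring
      rw [hratio]
      refine Circle.arg_exp ?_ ?_
      · have hpos : 0 < 2 * Real.pi / N := by positivity
        linarith [Real.pi_pos]
      · rw [div_le_iff₀ hN0]
        nlinarith [Real.pi_pos]
    rw [show W 0 = ∑ j ∈ Finset.range N,
        Complex.arg ((F ((0 : I), u (j + 1)) / F ((0 : I), u j) : Circle) : ℂ) from rfl]
    rw [Finset.sum_congr rfl harg, Finset.sum_const, Finset.card_range, nsmul_eq_mul]
    field_simp
  have hW1 : W 1 = 0 := by
    rw [show W 1 = ∑ j ∈ Finset.range N,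
        Complex.arg ((F ((1 : I), u (j + 1)) / F ((1 : I), u j) : Circle) : ℂ) from rfl]
    refine Finset.sum_eq_zero fun j hj => ?_
    rw [hF1, hF1]
    simp [Complex.arg_one]
  have hWR : Continuous fun r : ℝ => W (Set.projIcc 0 1 zero_le_one r) :=
    hWcont.comp continuous_projIcc
  have hIVT := intermediate_value_Icc' (by norm_num : (0 : ℝ) ≤ 1) hWR.continuousOn
  have hproj0 : Set.projIcc (0:ℝ) 1 zero_le_one 0 = (0 : I) :=
    Subtype.ext (by rw [Set.projIcc_of_mem _ (by norm_num : (0:ℝ) ∈ Set.Icc (0:ℝ) 1)]; rfl)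
  have hproj1 : Set.projIcc (0:ℝ) 1 zero_le_one 1 = (1 : I) :=
    Subtype.ext (by rw [Set.projIcc_of_mem _ (by norm_num : (1:ℝ) ∈ Set.Icc (0:ℝ) 1)]; rfl)
  have hπmem : Real.pi ∈ Set.Icc (W (Set.projIcc (0:ℝ) 1 zero_le_one 1))
      (W (Set.projIcc (0:ℝ) 1 zero_le_one 0)) := by
    rw [hproj0, hproj1, hW0, hW1]
    constructor
    · exact Real.pi_pos.le
    · linarith [Real.pi_pos]
  obtain ⟨r, _, hr⟩ := hIVT hπmem
  have hr' : W (Set.projIcc 0 1 zero_le_one r) = Real.pi := hr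
  have hcontra := hexp (Set.projIcc 0 1 zero_le_one r)
  rw [hr'] at hcontra
  have : ((Circle.exp Real.pi : Circle) : ℂ) = 1 := by rw [hcontra, Circle.coe_one]
  rw [Circle.coe_exp, Complex.exp_pi_mul_I] at this
  norm_num at this

/-- The infinite product of circles has totally disconnected topological fundamental
group, yet is not semilocally simply connected at the basepoint. -/
theorem stmt12 :
    TotallyDisconnectedSpace (ZerothHomotopy (Path circleP circleP)) ∧
    ¬ SemilocallySimplyConnectedAt (∀ _ : ℕ, Circle) circleP := by
  have hdisc := discreteCircleLoops
  constructor
  · refine ⟨fun S _ hS x hx y hy => ?_⟩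
    obtain ⟨γ, rfl⟩ := Quotient.exists_rep x
    obtain ⟨δ, rfl⟩ := Quotient.exists_rep y
    have hproj : ∀ n : ℕ, (γ.map (continuous_apply n) : Path (1 : Circle) 1).Homotopic
        (δ.map (continuous_apply n)) := by
      intro n
      set f : ZerothHomotopy (Path circleP circleP) → ZerothHomotopy (Path (1 : Circle) 1) :=
        Quotient.lift (fun η : Path circleP circleP =>
          Quotient.mk (pathSetoid _) ((η.map (continuous_apply n) : Path (1 : Circle) 1)))
          (fun a b hab => Quotient.sound
            (joined_iff_homotopic.2 ((joined_iff_homotopic.1 hab).map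
              ⟨fun g => g n, continuous_apply n⟩))) with hf_def
      have hfc : Continuous f :=
        Continuous.quotient_lift (continuous_quot_mk.comp (continuous_projQuot n)) _
      have himg : (f '' S).Subsingleton := (hS.image f hfc.continuousOn).subsingleton
      have hfeq := himg (Set.mem_image_of_mem f hx) (Set.mem_image_of_mem f hy)
      rw [hf_def] at hfeq
      exact joined_iff_homotopic.1 (Quotient.exact hfeq)
    have key : γ.Homotopic δ := by
      let Hn : ∀ n, (γ.map (continuous_apply n) : Path (1 : Circle) 1).Homotopy
          (δ.map (continuous_apply n)) := fun n => (hproj n).some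
      exact ⟨{ toFun := fun q n => Hn n q
               continuous_toFun := continuous_pi fun n => (Hn n).toHomotopy.continuous
               map_zero_left := fun t => funext fun n => (Hn n).toHomotopy.apply_zero t
               map_one_left := fun t => funext fun n => (Hn n).toHomotopy.apply_one t
               prop' := fun t z hz => funext fun n => (Hn n).eq_fst t hz }⟩
    exact Quotient.sound (joined_iff_homotopic.2 key)
  · rintro ⟨U, hU, hpU, hloop⟩
    obtain ⟨I0, v, hv, hsub⟩ := isOpen_pi_iff.1 hU circleP hpU
    obtain ⟨n, hn⟩ := I0.exists_notMem
    set γ : Path circleP circleP :=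
      ⟨⟨fun t m => if m = n then ω t else 1, by
          refine continuous_pi fun m => ?_
          by_cases hm : m = n
          · simpa [hm] using ω.continuous
          · simp [hm]
            exact continuous_const⟩,
        by funext m; by_cases hm : m = n <;> simp [hm, circleP],
        by funext m; by_cases hm : m = n <;> simp [hm, circleP]⟩ with hγ_def
    have hmem : ∀ t, γ t ∈ U := by
      intro t
      apply hsub
      intro i hi
      have hin : i ≠ n := fun h => hn (h ▸ hi)
      have : γ t i = 1 := by simp [hγ_def, hin]
      rw [this]
      exact (hv i hi).2
    have hhom := (hloop γ hmem).map ⟨fun g => g n, continuous_apply n⟩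
    have hrefl : ((Path.refl circleP).map (continuous_apply n) : Path (1 : Circle) 1)
        = Path.refl (1 : Circle) := by
      ext t
      rfl
    have hγn : (γ.map (continuous_apply n) : Path (1 : Circle) 1) = ω := by
      ext t
      rw [show ((γ.map (continuous_apply n)) t : Circle) = (if n = n then ω t else 1) from rfl]
      simp
      rfl
    rw [hrefl, hγn] at hhom
    exact omega_not_nullhomotopic hhom
end
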